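/- (Theorem 1.) Let (G_t,H_t), t ∈ ℕ, be a sequence of CSS pairs of strictly increasing block lengths n_t, such that every row of every G_t and every H_t has Hamming weight at most m (m ≥ 2), and such that the CSS distances satisfy min(d_{G_t}, d_{H_t}) ≥ D·ln(n_t) for some constant D > 0. Then for every K ≥ 0 and 0 ≤ p ≤ 1 satisfying (m−1)·[e^{−2K}(1−p) + e^{2K}p] < e^{−1/D}, the disorder-averaged homological differences converge to zero: lim_{t→∞} [ΔF_e(G_t,H_t;K)]_p = 0. -/

import Mathlib

open Matrix Filter Finset


open Matrix Filter

/-- Partition function `Z_e(G;K)` of the random-bond Ising model in Wegner's form. -/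
noncomputable def Zf {ρ : Type*} [Fintype ρ] [DecidableEq ρ] {n : ℕ}
    (G : Matrix ρ (Fin n) (ZMod 2)) (e : Fin n → ZMod 2) (K : ℝ) : ℝ :=
  ∑ α : ρ → ZMod 2,
    Real.exp (K * ∑ b : Fin n, (-1 : ℝ) ^ ((e b).val + ((Matrix.vecMul α G) b).val))

/-- `Hs` is an adapted dual of `H`: it stacks `G` on top of `k` extra rows, and its
row space equals `C_H^⊥ = {c | H cᵀ = 0}`. -/
def IsAdaptedDual {rG rH k n : ℕ} (G : Matrix (Fin rG) (Fin n) (ZMod 2))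
    (H : Matrix (Fin rH) (Fin n) (ZMod 2))
    (Hs : Matrix (Fin rG ⊕ Fin k) (Fin n) (ZMod 2)) : Prop :=
  (∀ i, Hs (Sum.inl i) = G i) ∧
  LinearMap.range Hs.vecMulLinear = LinearMap.ker H.mulVecLin

/-- Homological difference `ΔF_e(G,H;K) = ln Z_e(H*;K) − ln Z_e(G;K)`. -/
noncomputable def deltaF {ρ ρ' : Type*} [Fintype ρ] [DecidableEq ρ] [Fintype ρ'] [DecidableEq ρ'] {n : ℕ}
    (G : Matrix ρ (Fin n) (ZMod 2)) (Hs : Matrix ρ' (Fin n) (ZMod 2))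
    (e : Fin n → ZMod 2) (K : ℝ) : ℝ :=
  Real.log (Zf Hs e K) - Real.log (Zf G e K)

/-- Disorder average `[X_e]_p = Σ_e p^{|e|}(1−p)^{n−|e|} X_e`. -/
noncomputable def davg {n : ℕ} (p : ℝ) (X : (Fin n → ZMod 2) → ℝ) : ℝ :=
  ∑ e : Fin n → ZMod 2, p ^ hammingNorm e * (1 - p) ^ (n - hammingNorm e) * X e

/-- Average success probability of maximum-likelihood decoding. -/
noncomputable def Psucc {ρ ρ' : Type*} [Fintype ρ] [DecidableEq ρ] [Fintype ρ'] [DecidableEq ρ'] {n : ℕ}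
    (G : Matrix ρ (Fin n) (ZMod 2)) (Hs : Matrix ρ' (Fin n) (ZMod 2))
    (K p : ℝ) : ℝ :=
  davg p (fun e => Zf G e K / Zf Hs e K)

/-- CSS distance `d_G`: minimum Hamming weight of a vector `c` with `H cᵀ = 0`
that is not in the row space of `G`. -/
noncomputable def dCSS {rG rH n : ℕ} (G : Matrix (Fin rG) (Fin n) (ZMod 2))
    (H : Matrix (Fin rH) (Fin n) (ZMod 2)) : ℕ :=
  sInf {w | ∃ c : Fin n → ZMod 2,
    H.mulVec c = 0 ∧ (¬ ∃ α, Matrix.vecMul α G = c) ∧ hammingNorm c = w}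


namespace Stmt12

variable {n : ℕ}

/-- per-configuration Boltzmann weight -/
noncomputable def wgt (K : ℝ) (e c : Fin n → ZMod 2) : ℝ :=
  Real.exp (K * ∑ b, (-1 : ℝ) ^ ((e b).val + (c b).val))

/-- support as a finset -/
def suppF (c : Fin n → ZMod 2) : Finset (Fin n) := {b | c b ≠ 0}

lemma hammingNorm_eq_card_suppF (c : Fin n → ZMod 2) : hammingNorm c = (suppF c).card := rfl

lemma zmod2_cases (z : ZMod 2) : z = 0 ∨ z = 1 := by revert z; decide

lemma mem_suppF {c : Fin n → ZMod 2} {b : Fin n} : b ∈ suppF c ↔ c b ≠ 0 := by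
  simp [suppF]

lemma suppF_eq_one {c : Fin n → ZMod 2} {b : Fin n} (h : b ∈ suppF c) : c b = 1 := by
  rcases zmod2_cases (c b) with h0 | h1
  · exact absurd h0 (mem_suppF.mp h)
  · exact h1

lemma wgt_pos (K : ℝ) (e c : Fin n → ZMod 2) : 0 < wgt K e c := Real.exp_pos _

lemma wgt_prod (K : ℝ) (e c : Fin n → ZMod 2) :
    wgt K e c = ∏ b, Real.exp (K * (-1 : ℝ) ^ ((e b).val + (c b).val)) := by
  rw [wgt, Finset.mul_sum, Real.exp_sum]

/-- the defect factor -/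
noncomputable def Bfac (K : ℝ) (e γ : Fin n → ZMod 2) : ℝ :=
  ∏ b ∈ suppF γ, Real.exp (-(2 * K) * (-1 : ℝ) ^ ((e b).val))

lemma Bfac_nonneg (K : ℝ) (e γ : Fin n → ZMod 2) : 0 ≤ Bfac K e γ :=
  Finset.prod_nonneg fun _ _ => (Real.exp_pos _).le

lemma wgt_eq_wgt_zero_mul_Bfac (K : ℝ) (e c : Fin n → ZMod 2) :
    wgt K e c = wgt K e 0 * Bfac K e c := by
  rw [wgt_prod, wgt_prod, Bfac]
  have hfil : ∏ b ∈ suppF c, Real.exp (-(2 * K) * (-1 : ℝ) ^ ((e b).val))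
      = ∏ b, if c b ≠ 0 then Real.exp (-(2 * K) * (-1 : ℝ) ^ ((e b).val)) else 1 := by
    rw [suppF, Finset.prod_filter]
  rw [hfil, ← Finset.prod_mul_distrib]
  refine Finset.prod_congr rfl fun b _ => ?_
  rcases zmod2_cases (c b) with h | h
  · simp [h, Pi.zero_apply]
  · have : ((1 : ZMod 2)).val = 1 := rfl
    simp only [h, this, Pi.zero_apply, ZMod.val_zero, if_pos, ne_eq, one_ne_zero,
      not_false_eq_true]
    rw [← Real.exp_add]
    congr 1
    rw [pow_succ]
    ring


lemma suppF_add_subset (a b : Fin n → ZMod 2) :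
    suppF (a + b) ⊆ suppF a ∪ suppF b := by
  intro x hx
  rw [mem_suppF] at hx
  by_contra h
  simp only [Finset.mem_union, mem_suppF, not_or, not_not] at h
  apply hx
  simp [Pi.add_apply, h.1, h.2]

lemma suppF_add_of_disjoint {a b : Fin n → ZMod 2}
    (h : Disjoint (suppF a) (suppF b)) : suppF (a + b) = suppF a ∪ suppF b := by
  apply Finset.Subset.antisymm (suppF_add_subset a b)
  intro x hx
  rw [mem_suppF]
  rcases Finset.mem_union.mp hx with hxa | hxb
  · have hb : b x = 0 := by
      by_contra hb
      exact (Finset.disjoint_left.mp h hxa) (mem_suppF.mpr hb)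
    simp [Pi.add_apply, hb, mem_suppF.mp hxa]
  · have ha : a x = 0 := by
      by_contra ha
      exact (Finset.disjoint_left.mp h (mem_suppF.mpr ha)) hxb
    simp [Pi.add_apply, ha, mem_suppF.mp hxb]

/-- indicator vector of a finset -/
def indC (S : Finset (Fin n)) : Fin n → ZMod 2 := fun b => if b ∈ S then 1 else 0

@[simp] lemma suppF_indC (S : Finset (Fin n)) : suppF (indC S) = S := by
  ext b; by_cases h : b ∈ S <;> simp [mem_suppF, indC, h]

lemma indC_suppF (c : Fin n → ZMod 2) : indC (suppF c) = c := by
  funext b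
  by_cases h : b ∈ suppF c
  · rw [indC, if_pos h, suppF_eq_one h]
  · rw [indC, if_neg h]
    rw [mem_suppF, not_not] at h
    exact h.symm

lemma eq_of_suppF_eq {a b : Fin n → ZMod 2} (h : suppF a = suppF b) : a = b := by
  rw [← indC_suppF a, ← indC_suppF b, h]


@[simp] lemma suppF_zero : suppF (0 : Fin n → ZMod 2) = ∅ := by
  ext b; simp [mem_suppF]

lemma Bfac_add_of_disjoint (K : ℝ) (e : Fin n → ZMod 2) {a b : Fin n → ZMod 2}
    (h : Disjoint (suppF a) (suppF b)) :
    Bfac K e (a + b) = Bfac K e a * Bfac K e b := by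
  rw [Bfac, Bfac, Bfac, suppF_add_of_disjoint h, Finset.prod_union h]

lemma suppF_sum_and_Bfac (K : ℝ) (e : Fin n → ZMod 2) (F : Finset (Fin n → ZMod 2))
    (hpw : (F : Set (Fin n → ZMod 2)).Pairwise fun a b => Disjoint (suppF a) (suppF b)) :
    suppF (∑ γ ∈ F, γ) = F.biUnion suppF ∧
      Bfac K e (∑ γ ∈ F, γ) = ∏ γ ∈ F, Bfac K e γ := by
  classical
  induction F using Finset.induction_on with
  | empty => simp [Bfac]
  | @insert a F ha ih =>
    have hF : (F : Set (Fin n → ZMod 2)).Pairwise fun a b => Disjoint (suppF a) (suppF b) :=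
      hpw.mono (by simp [Set.subset_insert])
    have ihF := ih hF
    have hdis : Disjoint (suppF a) (suppF (∑ γ ∈ F, γ)) := by
      rw [ihF.1, Finset.disjoint_biUnion_right]
      intro b hb
      exact hpw (by simp) (by simp [hb]) (fun h => ha (h ▸ hb))
    rw [Finset.sum_insert ha]
    refine ⟨?_, ?_⟩
    · rw [suppF_add_of_disjoint hdis, ihF.1, Finset.biUnion_insert]
    · rw [Bfac_add_of_disjoint K e hdis, ihF.2, Finset.prod_insert ha]

variable {rH : ℕ}

/-- irreducible nonzero codeword of `ker H` -/
def Irr (H : Matrix (Fin rH) (Fin n) (ZMod 2)) (c : Fin n → ZMod 2) : Prop :=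
  c ≠ 0 ∧ H.mulVec c = 0 ∧
    ∀ s : Fin n → ZMod 2, s ≠ 0 → s ≠ c → suppF s ⊆ suppF c → H.mulVec s ≠ 0

lemma zmod2_add_self (u : ZMod 2) : u + u = 0 := by revert u; decide

lemma decomp (H : Matrix (Fin rH) (Fin n) (ZMod 2)) :
    ∀ N (c : Fin n → ZMod 2), (suppF c).card ≤ N → H.mulVec c = 0 →
    ∃ F : Finset (Fin n → ZMod 2),
      (∀ γ ∈ F, Irr H γ) ∧
      ((F : Set (Fin n → ZMod 2)).Pairwise fun a b => Disjoint (suppF a) (suppF b)) ∧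
      ∑ γ ∈ F, γ = c ∧ ∀ γ ∈ F, suppF γ ⊆ suppF c := by
  intro N
  induction N with
  | zero =>
    intro c hc _
    have hs : suppF c = ∅ := Finset.card_eq_zero.mp (Nat.le_zero.mp hc)
    have : c = 0 := by rw [← indC_suppF c, hs]; funext b; simp [indC]
    exact ⟨∅, by simp, by simp, by simp [this], by simp⟩
  | succ N ih =>
    intro c hc hker
    by_cases h0 : c = 0
    · exact ⟨∅, by simp, by simp, by simp [h0], by simp⟩
    by_cases hirr : Irr H c
    · exact ⟨{c}, by simp [hirr], by simp, by simp, by simp⟩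
    have hex : ∃ s, s ≠ 0 ∧ s ≠ c ∧ suppF s ⊆ suppF c ∧ H.mulVec s = 0 := by
      by_contra hcon
      push_neg at hcon
      exact hirr ⟨h0, hker, fun s h1 h2 h3 => hcon s h1 h2 h3⟩
    obtain ⟨s, hs0, hsc, hss, hsk⟩ := hex
    set c' := c + s with hc'def
    have hsupp' : suppF c' = suppF c \ suppF s := by
      ext x
      by_cases hx : x ∈ suppF s
      · have hcx : c x = 1 := suppF_eq_one (hss hx)
        have hsx : s x = 1 := suppF_eq_one hx
        simp [mem_suppF, hc'def, Pi.add_apply, hcx, hsx, hx, zmod2_add_self (1 : ZMod 2)]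
      · have hsx : s x = 0 := by
          rcases zmod2_cases (s x) with h | h
          · exact h
          · exact absurd (mem_suppF.mpr (by simp [h])) hx
        simp [mem_suppF, hc'def, Pi.add_apply, hsx, hx]
    have hssub : suppF s ⊂ suppF c := by
      refine ⟨hss, fun h => hsc (eq_of_suppF_eq (Finset.Subset.antisymm hss h))⟩
    have hcards : (suppF s).card < (suppF c).card := Finset.card_lt_card hssub
    have hspos : 0 < (suppF s).card := by
      rw [Finset.card_pos]
      by_contra h
      rw [Finset.not_nonempty_iff_eq_empty] at h
      exact hs0 (by rw [← indC_suppF s, h]; funext b; simp [indC])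
    have hcard' : (suppF c').card ≤ N := by
      rw [hsupp', Finset.card_sdiff_of_subset hss]
      omega
    have hcardS : (suppF s).card ≤ N := by omega
    have hker' : H.mulVec c' = 0 := by
      rw [hc'def, Matrix.mulVec_add, hker, hsk, add_zero]
    obtain ⟨F₁, hF₁irr, hF₁pw, hF₁sum, hF₁sub⟩ := ih s hcardS hsk
    obtain ⟨F₂, hF₂irr, hF₂pw, hF₂sum, hF₂sub⟩ := ih c' hcard' hker'
    have hcross : ∀ γ₁ ∈ F₁, ∀ γ₂ ∈ F₂, Disjoint (suppF γ₁) (suppF γ₂) := by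
      intro γ₁ h1 γ₂ h2
      exact Finset.disjoint_of_subset_left (hF₁sub γ₁ h1)
        (Finset.disjoint_of_subset_right (hF₂sub γ₂ h2)
          (by rw [hsupp']; exact Finset.disjoint_sdiff))
    have hFdisj : Disjoint F₁ F₂ := by
      rw [Finset.disjoint_left]
      intro γ h1 h2
      have : Disjoint (suppF γ) (suppF γ) := hcross γ h1 γ h2
      have hγ0 : suppF γ = ∅ := by
        rwa [Finset.disjoint_self_iff_empty] at this
      exact (hF₁irr γ h1).1 (by rw [← indC_suppF γ, hγ0]; funext b; simp [indC])
    refine ⟨F₁ ∪ F₂, ?_, ?_, ?_, ?_⟩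
    · intro γ hγ
      rcases Finset.mem_union.mp hγ with h | h
      · exact hF₁irr γ h
      · exact hF₂irr γ h
    · intro a haa b hbb hab
      rcases Finset.mem_union.mp (by exact_mod_cast haa) with h1 | h1 <;>
        rcases Finset.mem_union.mp (by exact_mod_cast hbb) with h2 | h2
      · exact hF₁pw (by exact_mod_cast h1) (by exact_mod_cast h2) hab
      · exact hcross a h1 b h2
      · exact (hcross b h2 a h1).symm
      · exact hF₂pw (by exact_mod_cast h1) (by exact_mod_cast h2) hab
    · rw [Finset.sum_union hFdisj, hF₁sum, hF₂sum, hc'def]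
      funext x
      simp only [Pi.add_apply]
      calc s x + (c x + s x) = c x + (s x + s x) := by ring
        _ = c x := by rw [zmod2_add_self, add_zero]
    · intro γ hγ
      rcases Finset.mem_union.mp hγ with h | h
      · exact (hF₁sub γ h).trans hss
      · exact (hF₂sub γ h).trans (by rw [hsupp']; exact Finset.sdiff_subset)


section Main

variable {rG : ℕ} (Gm : Matrix (Fin rG) (Fin n) (ZMod 2)) (Hm : Matrix (Fin rH) (Fin n) (ZMod 2))

/-- kernel codewords of `H` as a finset -/
def Cfin : Finset (Fin n → ZMod 2) := Finset.univ.filter (fun c => Hm.mulVec c = 0)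

/-- row space of `G` as a finset -/
noncomputable def CGfin : Finset (Fin n → ZMod 2) :=
  Finset.univ.filter (fun c => ∃ α, Matrix.vecMul α Gm = c)

/-- irreducible codewords outside the row space of `G` -/
noncomputable def IrrB : Finset (Fin n → ZMod 2) :=
  @Finset.filter _ (fun γ => Irr Hm γ ∧ ¬ ∃ α, Matrix.vecMul α Gm = γ)
    (Classical.decPred _) Finset.univ

lemma zero_mem_CGfin : 0 ∈ CGfin Gm := by
  simp only [CGfin, Finset.mem_filter, Finset.mem_univ, true_and]
  exact ⟨0, Matrix.zero_vecMul Gm⟩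

lemma sum_C_le (K : ℝ) (e : Fin n → ZMod 2) :
    ∑ c ∈ Cfin Hm, wgt K e c ≤
      (∑ c' ∈ CGfin Gm, wgt K e c') * ∏ γ ∈ IrrB Gm Hm, (1 + Bfac K e γ) := by
  classical
  have hdec : ∀ c : Fin n → ZMod 2, Hm.mulVec c = 0 → ∃ F : Finset (Fin n → ZMod 2),
      (∀ γ ∈ F, Irr Hm γ) ∧
      ((F : Set (Fin n → ZMod 2)).Pairwise fun a b => Disjoint (suppF a) (suppF b)) ∧
      ∑ γ ∈ F, γ = c ∧ ∀ γ ∈ F, suppF γ ⊆ suppF c :=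
    fun c h => decomp Hm (suppF c).card c le_rfl h
  choose! Fc hFirr hFpw hFsum hFsub using hdec
  let badP : (Fin n → ZMod 2) → Prop := fun γ => ¬ ∃ α, Matrix.vecMul α Gm = γ
  let bad : (Fin n → ZMod 2) → Finset (Fin n → ZMod 2) := fun c => (Fc c).filter badP
  let gp : (Fin n → ZMod 2) → (Fin n → ZMod 2) :=
    fun c => ∑ γ ∈ (Fc c).filter (fun γ => ¬ badP γ), γ
  have key : ∀ c ∈ Cfin Hm,
      (bad c ∈ (IrrB Gm Hm).powerset ∧ gp c ∈ CGfin Gm) ∧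
      wgt K e c = (∏ γ ∈ bad c, Bfac K e γ) * wgt K e (gp c) ∧
      gp c + ∑ γ ∈ bad c, γ = c := by
    intro c hc
    have hcker : Hm.mulVec c = 0 := by
      simpa [Cfin] using hc
    have hFs := hFsum c hcker
    have hpw := hFpw c hcker
    have hpwG : (((Fc c).filter (fun γ => ¬ badP γ) : Finset _) : Set (Fin n → ZMod 2)).Pairwise
        (fun a b => Disjoint (suppF a) (suppF b)) := by
      refine hpw.mono ?_
      exact_mod_cast Finset.coe_subset.mpr (Finset.filter_subset _ _)
    have hsplit : gp c + ∑ γ ∈ bad c, γ = c := by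
      show (∑ γ ∈ (Fc c).filter (fun γ => ¬ badP γ), γ) + ∑ γ ∈ (Fc c).filter badP, γ = c
      rw [add_comm, Finset.sum_filter_add_sum_filter_not (Fc c) badP]
      exact hFs
    refine ⟨⟨?_, ?_⟩, ?_, hsplit⟩
    · rw [Finset.mem_powerset]
      intro γ hγ
      rw [Finset.mem_filter] at hγ
      simp only [IrrB, Finset.mem_filter, Finset.mem_univ, true_and]
      exact ⟨hFirr c hcker γ hγ.1, hγ.2⟩
    · have hmem : ∀ γ ∈ (Fc c).filter (fun γ => ¬ badP γ),
          γ ∈ LinearMap.range Gm.vecMulLinear := by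
        intro γ hγ
        rw [Finset.mem_filter] at hγ
        rcases not_not.mp hγ.2 with ⟨α, hα⟩
        exact ⟨α, by simpa [Matrix.vecMulLinear_apply] using hα⟩
      have hgprange : gp c ∈ LinearMap.range Gm.vecMulLinear :=
        Submodule.sum_mem _ hmem
      rcases hgprange with ⟨α, hα⟩
      simp only [CGfin, Finset.mem_filter, Finset.mem_univ, true_and]
      exact ⟨α, by simpa [Matrix.vecMulLinear_apply] using hα⟩
    · have hBc : Bfac K e c = ∏ γ ∈ Fc c, Bfac K e γ := by
        conv_lhs => rw [← hFs]
        exact (suppF_sum_and_Bfac K e (Fc c) hpw).2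
      have hBgp : Bfac K e (gp c) = ∏ γ ∈ (Fc c).filter (fun γ => ¬ badP γ), Bfac K e γ :=
        (suppF_sum_and_Bfac K e _ hpwG).2
      rw [wgt_eq_wgt_zero_mul_Bfac K e c, hBc,
        ← Finset.prod_filter_mul_prod_filter_not (Fc c) badP,
        wgt_eq_wgt_zero_mul_Bfac K e (gp c), hBgp]
      ring
  have hinj : ∀ c₁ ∈ Cfin Hm, ∀ c₂ ∈ Cfin Hm,
      (fun c => (bad c, gp c)) c₁ = (fun c => (bad c, gp c)) c₂ → c₁ = c₂ := by
    intro c₁ h1 c₂ h2 heq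
    have e1 := (key c₁ h1).2.2
    have e2 := (key c₂ h2).2.2
    simp only [Prod.mk.injEq] at heq
    rw [← e1, ← e2, heq.1, heq.2]
  calc ∑ c ∈ Cfin Hm, wgt K e c
      = ∑ c ∈ Cfin Hm, (∏ γ ∈ bad c, Bfac K e γ) * wgt K e (gp c) :=
        Finset.sum_congr rfl (fun c hc => (key c hc).2.1)
    _ = ∑ q ∈ (Cfin Hm).image (fun c => (bad c, gp c)),
          (∏ γ ∈ q.1, Bfac K e γ) * wgt K e q.2 := by
        rw [Finset.sum_image (fun c₁ h1 c₂ h2 h => hinj c₁ h1 c₂ h2 h)]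
    _ ≤ ∑ q ∈ (IrrB Gm Hm).powerset ×ˢ CGfin Gm,
          (∏ γ ∈ q.1, Bfac K e γ) * wgt K e q.2 := by
        apply Finset.sum_le_sum_of_subset_of_nonneg
        · intro q hq
          rcases Finset.mem_image.mp hq with ⟨c, hc, rfl⟩
          exact Finset.mem_product.mpr ⟨(key c hc).1.1, (key c hc).1.2⟩
        · intro q _ _
          exact mul_nonneg (Finset.prod_nonneg fun γ _ => Bfac_nonneg K e γ)
            (wgt_pos K e q.2).le
    _ = ∑ t ∈ (IrrB Gm Hm).powerset, (∏ γ ∈ t, Bfac K e γ) * ∑ c' ∈ CGfin Gm, wgt K e c' := by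
        rw [Finset.sum_product]
        exact Finset.sum_congr rfl fun t _ => by rw [Finset.mul_sum]
    _ = (∑ c' ∈ CGfin Gm, wgt K e c') * ∏ γ ∈ IrrB Gm Hm, (1 + Bfac K e γ) := by
        rw [← Finset.sum_mul, mul_comm]
        congr 1
        rw [Finset.prod_congr rfl (fun (γ : Fin n → ZMod 2) _ =>
          add_comm (1 : ℝ) (Bfac K e γ)), Finset.prod_add]
        exact (Finset.sum_congr rfl fun t _ => by
          rw [Finset.prod_const_one, mul_one]).symm

lemma Zf_pos {ρ : Type*} [Fintype ρ] [DecidableEq ρ] (M : Matrix ρ (Fin n) (ZMod 2))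
    (e : Fin n → ZMod 2) (K : ℝ) : 0 < Zf M e K := by
  apply Finset.sum_pos (fun α _ => Real.exp_pos _)
  exact Finset.univ_nonempty

lemma fiber_card {ρ : Type*} [Fintype ρ] [DecidableEq ρ] (M : Matrix ρ (Fin n) (ZMod 2))
    {c : Fin n → ZMod 2}
    (α₀ : ρ → ZMod 2) (hα₀ : Matrix.vecMul α₀ M = c) :
    (Finset.univ.filter (fun α : ρ → ZMod 2 => Matrix.vecMul α M = c)).card =
    (Finset.univ.filter (fun α : ρ → ZMod 2 => Matrix.vecMul α M = 0)).card := by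
  classical
  have hvv : ∀ v : ρ → ZMod 2, v + v = 0 := fun v => funext fun b => zmod2_add_self (v b)
  have hcc : ∀ v : Fin n → ZMod 2, v + v = 0 := fun v => funext fun b => zmod2_add_self (v b)
  apply Finset.card_bij' (fun α _ => α + α₀) (fun β _ => β + α₀)
  · intro a ha
    rw [Finset.mem_filter] at ha ⊢
    refine ⟨Finset.mem_univ _, ?_⟩
    rw [Matrix.add_vecMul, ha.2, hα₀, hcc]
  · intro b hb
    rw [Finset.mem_filter] at hb ⊢
    refine ⟨Finset.mem_univ _, ?_⟩
    rw [Matrix.add_vecMul, hb.2, hα₀, zero_add]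
  · intro a _
    rw [add_assoc, hvv, add_zero]
  · intro b _
    rw [add_assoc, hvv, add_zero]

lemma Zf_eq_card_mul_sum {ρ : Type*} [Fintype ρ] [DecidableEq ρ] (M : Matrix ρ (Fin n) (ZMod 2))
    (e : Fin n → ZMod 2)
    (K : ℝ) :
    Zf M e K = ((Finset.univ.filter
        (fun α : ρ → ZMod 2 => Matrix.vecMul α M = 0)).card : ℝ) *
      ∑ c ∈ Finset.image (fun α : ρ → ZMod 2 => Matrix.vecMul α M) Finset.univ,
        wgt K e c := by
  classical
  have h0 : Zf M e K = ∑ α : ρ → ZMod 2, wgt K e (Matrix.vecMul α M) := rfl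
  rw [h0, ← Finset.sum_fiberwise_of_maps_to'
    (g := fun α : ρ → ZMod 2 => Matrix.vecMul α M)
    (fun α _ => Finset.mem_image_of_mem _ (Finset.mem_univ α)) (wgt K e)]
  rw [Finset.mul_sum]
  refine Finset.sum_congr rfl fun c hc => ?_
  rw [Finset.sum_const, nsmul_eq_mul]
  rcases Finset.mem_image.mp hc with ⟨α₀, _, hα₀⟩
  rw [fiber_card M α₀ hα₀]

lemma vecMul_elim {rG kk : ℕ} (Gm : Matrix (Fin rG) (Fin n) (ZMod 2))
    (Hs : Matrix (Fin rG ⊕ Fin kk) (Fin n) (ZMod 2)) (h1 : ∀ i, Hs (Sum.inl i) = Gm i)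
    (α : Fin rG → ZMod 2) :
    Matrix.vecMul (Sum.elim α 0) Hs = Matrix.vecMul α Gm := by
  funext b
  show (Sum.elim α 0) ⬝ᵥ (fun i => Hs i b) = α ⬝ᵥ (fun i => Gm i b)
  rw [dotProduct, dotProduct, Fintype.sum_sum_type]
  simp only [Sum.elim_inl, Sum.elim_inr, Pi.zero_apply, zero_mul, Finset.sum_const_zero,
    add_zero]
  exact Finset.sum_congr rfl fun i _ => by rw [h1 i]

lemma Zf_G_le_Zf_Hs {rG kk : ℕ} (Gm : Matrix (Fin rG) (Fin n) (ZMod 2))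
    (Hs : Matrix (Fin rG ⊕ Fin kk) (Fin n) (ZMod 2)) (h1 : ∀ i, Hs (Sum.inl i) = Gm i)
    (e : Fin n → ZMod 2) (K : ℝ) : Zf Gm e K ≤ Zf Hs e K := by
  classical
  have hinj : Function.Injective (fun α : Fin rG → ZMod 2 => Sum.elim α (0 : Fin kk → ZMod 2)) := by
    intro a b hab
    funext i
    exact congrFun hab (Sum.inl i)
  have h0 : Zf Gm e K = ∑ α : Fin rG → ZMod 2, wgt K e (Matrix.vecMul α Gm) := rfl
  have h1' : Zf Hs e K = ∑ β : Fin rG ⊕ Fin kk → ZMod 2, wgt K e (Matrix.vecMul β Hs) := rfl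
  rw [h0, h1']
  calc ∑ α : Fin rG → ZMod 2, wgt K e (Matrix.vecMul α Gm)
      = ∑ α : Fin rG → ZMod 2, wgt K e (Matrix.vecMul (Sum.elim α 0) Hs) := by
        exact Finset.sum_congr rfl fun α _ => by rw [vecMul_elim Gm Hs h1]
    _ = ∑ β ∈ Finset.image (fun α : Fin rG → ZMod 2 => Sum.elim α (0 : Fin kk → ZMod 2))
          Finset.univ, wgt K e (Matrix.vecMul β Hs) := by
        rw [Finset.sum_image (fun a _ b _ h => hinj h)]
    _ ≤ ∑ β : Fin rG ⊕ Fin kk → ZMod 2, wgt K e (Matrix.vecMul β Hs) := by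
        apply Finset.sum_le_sum_of_subset_of_nonneg (Finset.subset_univ _)
        intro β _ _
        exact (wgt_pos K e _).le

lemma deltaF_nonneg {rG kk : ℕ} (Gm : Matrix (Fin rG) (Fin n) (ZMod 2))
    (Hs : Matrix (Fin rG ⊕ Fin kk) (Fin n) (ZMod 2)) (h1 : ∀ i, Hs (Sum.inl i) = Gm i)
    (e : Fin n → ZMod 2) (K : ℝ) : 0 ≤ deltaF Gm Hs e K := by
  rw [deltaF, sub_nonneg]
  exact Real.log_le_log (Zf_pos Gm e K) (Zf_G_le_Zf_Hs Gm Hs h1 e K)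

lemma card_ker_eq_pow {ρ : Type*} [Fintype ρ] [DecidableEq ρ] (M : Matrix ρ (Fin n) (ZMod 2)) :
    ((Finset.univ.filter (fun α : ρ → ZMod 2 => Matrix.vecMul α M = 0)).card : ℕ) =
      2 ^ (Module.finrank (ZMod 2) (LinearMap.ker M.vecMulLinear)) := by
  classical
  rw [← Fintype.card_subtype]
  have e1 : {α : ρ → ZMod 2 // Matrix.vecMul α M = 0} ≃
      (LinearMap.ker M.vecMulLinear) := by
    apply Equiv.subtypeEquivRight
    intro α
    rw [LinearMap.mem_ker, Matrix.vecMulLinear_apply]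
  rw [Fintype.card_congr e1]
  have := Module.card_eq_pow_finrank (K := ZMod 2) (V := LinearMap.ker M.vecMulLinear)
  rwa [ZMod.card 2] at this

lemma Nker_le {rG kk : ℕ} (Gm : Matrix (Fin rG) (Fin n) (ZMod 2))
    (Hm : Matrix (Fin rH) (Fin n) (ZMod 2)) (Hs : Matrix (Fin rG ⊕ Fin kk) (Fin n) (ZMod 2))
    (hHs : IsAdaptedDual Gm Hm Hs) (hk : kk = n - Gm.rank - Hm.rank) :
    ((Finset.univ.filter
        (fun β : Fin rG ⊕ Fin kk → ZMod 2 => Matrix.vecMul β Hs = 0)).card) ≤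
    ((Finset.univ.filter (fun α : Fin rG → ZMod 2 => Matrix.vecMul α Gm = 0)).card) := by
  classical
  rw [card_ker_eq_pow, card_ker_eq_pow]
  apply Nat.pow_le_pow_right (by norm_num)
  -- finrank bookkeeping
  have f1 : Module.finrank (ZMod 2) (LinearMap.range Hs.vecMulLinear) +
      Module.finrank (ZMod 2) (LinearMap.ker Hs.vecMulLinear) = rG + kk := by
    have := LinearMap.finrank_range_add_finrank_ker Hs.vecMulLinear
    rwa [Module.finrank_pi (ZMod 2), Fintype.card_sum, Fintype.card_fin, Fintype.card_fin]
      at this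
  have f2 : Module.finrank (ZMod 2) (LinearMap.range Hs.vecMulLinear) =
      Module.finrank (ZMod 2) (LinearMap.ker Hm.mulVecLin) := by rw [hHs.2]
  have f3 : Hm.rank + Module.finrank (ZMod 2) (LinearMap.ker Hm.mulVecLin) = n := by
    have := LinearMap.finrank_range_add_finrank_ker Hm.mulVecLin
    rwa [Module.finrank_pi (ZMod 2), Fintype.card_fin] at this
  have f4 : Module.finrank (ZMod 2) (LinearMap.range Gm.vecMulLinear) +
      Module.finrank (ZMod 2) (LinearMap.ker Gm.vecMulLinear) = rG := by
    have := LinearMap.finrank_range_add_finrank_ker Gm.vecMulLinear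
    rwa [Module.finrank_pi (ZMod 2), Fintype.card_fin] at this
  have f5 : Module.finrank (ZMod 2) (LinearMap.range Gm.vecMulLinear) = Gm.rank := by
    have h := Matrix.rank_transpose Gm
    rw [Matrix.rank, Matrix.mulVecLin_transpose] at h
    exact h
  have f6 : Module.finrank (ZMod 2) (LinearMap.range Gm.vecMulLinear) ≤
      Module.finrank (ZMod 2) (LinearMap.ker Hm.mulVecLin) := by
    rw [← hHs.2]
    apply Submodule.finrank_mono
    rintro x ⟨α, rfl⟩
    exact ⟨Sum.elim α 0, by rw [Matrix.vecMulLinear_apply, Matrix.vecMulLinear_apply,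
      vecMul_elim Gm Hs hHs.1]⟩
  omega

lemma image_vecMul_Hs_eq {rG kk : ℕ} (Gm : Matrix (Fin rG) (Fin n) (ZMod 2))
    (Hm : Matrix (Fin rH) (Fin n) (ZMod 2)) (Hs : Matrix (Fin rG ⊕ Fin kk) (Fin n) (ZMod 2))
    (hHs : IsAdaptedDual Gm Hm Hs) :
    Finset.image (fun β : Fin rG ⊕ Fin kk → ZMod 2 => Matrix.vecMul β Hs) Finset.univ
      = Cfin Hm := by
  classical
  ext c
  rw [Finset.mem_image]
  constructor
  · rintro ⟨β, _, rfl⟩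
    have : Matrix.vecMul β Hs ∈ LinearMap.range Hs.vecMulLinear :=
      ⟨β, by rw [Matrix.vecMulLinear_apply]⟩
    rw [hHs.2, LinearMap.mem_ker] at this
    simp only [Cfin, Finset.mem_filter, Finset.mem_univ, true_and]
    exact this
  · intro hc
    have hc' : c ∈ LinearMap.ker Hm.mulVecLin := by
      rw [LinearMap.mem_ker]
      simpa [Cfin] using hc
    rw [← hHs.2] at hc'
    rcases hc' with ⟨β, hβ⟩
    exact ⟨β, Finset.mem_univ _, by rw [← Matrix.vecMulLinear_apply]; exact hβ⟩

lemma image_vecMul_G_eq {rG : ℕ} (Gm : Matrix (Fin rG) (Fin n) (ZMod 2)) :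
    Finset.image (fun α : Fin rG → ZMod 2 => Matrix.vecMul α Gm) Finset.univ = CGfin Gm := by
  classical
  ext c
  simp [CGfin, Finset.mem_image]

lemma deltaF_le_sum_Bfac {rG kk : ℕ} (Gm : Matrix (Fin rG) (Fin n) (ZMod 2))
    (Hm : Matrix (Fin rH) (Fin n) (ZMod 2)) (Hs : Matrix (Fin rG ⊕ Fin kk) (Fin n) (ZMod 2))
    (hHs : IsAdaptedDual Gm Hm Hs) (hk : kk = n - Gm.rank - Hm.rank)
    (e : Fin n → ZMod 2) (K : ℝ) :
    deltaF Gm Hs e K ≤ ∑ γ ∈ IrrB Gm Hm, Bfac K e γ := by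
  classical
  set NH : ℕ := (Finset.univ.filter
    (fun β : Fin rG ⊕ Fin kk → ZMod 2 => Matrix.vecMul β Hs = 0)).card with hNH
  set NG : ℕ := (Finset.univ.filter
    (fun α : Fin rG → ZMod 2 => Matrix.vecMul α Gm = 0)).card with hNG
  have hZHs : Zf Hs e K = (NH : ℝ) * ∑ c ∈ Cfin Hm, wgt K e c := by
    rw [Zf_eq_card_mul_sum, image_vecMul_Hs_eq Gm Hm Hs hHs]
  have hZG : Zf Gm e K = (NG : ℝ) * ∑ c ∈ CGfin Gm, wgt K e c := by
    rw [Zf_eq_card_mul_sum, image_vecMul_G_eq Gm]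
  have hP1 : (1 : ℝ) ≤ ∏ γ ∈ IrrB Gm Hm, (1 + Bfac K e γ) := by
    calc (1:ℝ) = ∏ _γ ∈ IrrB Gm Hm, (1:ℝ) := by rw [Finset.prod_const_one]
      _ ≤ ∏ γ ∈ IrrB Gm Hm, (1 + Bfac K e γ) := by
          apply Finset.prod_le_prod (fun γ _ => by norm_num)
          intro γ _
          nlinarith [Bfac_nonneg K e γ]
  have hPpos : (0 : ℝ) < ∏ γ ∈ IrrB Gm Hm, (1 + Bfac K e γ) := lt_of_lt_of_le one_pos hP1
  have hkey : Zf Hs e K ≤ Zf Gm e K * ∏ γ ∈ IrrB Gm Hm, (1 + Bfac K e γ) := by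
    rw [hZHs, hZG]
    have hnn : (0 : ℝ) ≤ ∑ c ∈ Cfin Hm, wgt K e c :=
      Finset.sum_nonneg fun c _ => (wgt_pos K e c).le
    calc (NH : ℝ) * ∑ c ∈ Cfin Hm, wgt K e c
        ≤ (NG : ℝ) * ∑ c ∈ Cfin Hm, wgt K e c := by
          apply mul_le_mul_of_nonneg_right _ hnn
          exact_mod_cast Nker_le Gm Hm Hs hHs hk
      _ ≤ (NG : ℝ) * ((∑ c' ∈ CGfin Gm, wgt K e c') * ∏ γ ∈ IrrB Gm Hm, (1 + Bfac K e γ)) := by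
          apply mul_le_mul_of_nonneg_left (sum_C_le Gm Hm K e) (Nat.cast_nonneg _)
      _ = (NG : ℝ) * (∑ c' ∈ CGfin Gm, wgt K e c') * ∏ γ ∈ IrrB Gm Hm, (1 + Bfac K e γ) := by
          ring
  have hlog : deltaF Gm Hs e K ≤ Real.log (∏ γ ∈ IrrB Gm Hm, (1 + Bfac K e γ)) := by
    rw [deltaF, sub_le_iff_le_add]
    calc Real.log (Zf Hs e K)
        ≤ Real.log (Zf Gm e K * ∏ γ ∈ IrrB Gm Hm, (1 + Bfac K e γ)) :=
          Real.log_le_log (Zf_pos Hs e K) hkey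
      _ = Real.log (Zf Gm e K) + Real.log (∏ γ ∈ IrrB Gm Hm, (1 + Bfac K e γ)) :=
          Real.log_mul (ne_of_gt (Zf_pos Gm e K)) (ne_of_gt hPpos)
      _ = Real.log (∏ γ ∈ IrrB Gm Hm, (1 + Bfac K e γ)) + Real.log (Zf Gm e K) := by ring
  refine hlog.trans ?_
  rw [Real.log_prod (fun γ _ => ne_of_gt (by nlinarith [Bfac_nonneg K e γ]))]
  apply Finset.sum_le_sum
  intro γ _
  have h1B : (0 : ℝ) < 1 + Bfac K e γ := by nlinarith [Bfac_nonneg K e γ]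
  have := Real.log_le_sub_one_of_pos h1B
  linarith

lemma coeff_nonneg {p : ℝ} (hp0 : 0 ≤ p) (hp1 : p ≤ 1) (e : Fin n → ZMod 2) :
    0 ≤ p ^ hammingNorm e * (1 - p) ^ (n - hammingNorm e) :=
  mul_nonneg (pow_nonneg hp0 _) (pow_nonneg (by linarith) _)

lemma davg_nonneg {p : ℝ} (hp0 : 0 ≤ p) (hp1 : p ≤ 1) {X : (Fin n → ZMod 2) → ℝ}
    (hX : ∀ e, 0 ≤ X e) : 0 ≤ davg p X :=
  Finset.sum_nonneg fun e _ => mul_nonneg (coeff_nonneg hp0 hp1 e) (hX e)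

lemma davg_mono {p : ℝ} (hp0 : 0 ≤ p) (hp1 : p ≤ 1) {X Y : (Fin n → ZMod 2) → ℝ}
    (h : ∀ e, X e ≤ Y e) : davg p X ≤ davg p Y :=
  Finset.sum_le_sum fun e _ => mul_le_mul_of_nonneg_left (h e) (coeff_nonneg hp0 hp1 e)

lemma davg_sum {ι : Type*} (p : ℝ) (T : Finset ι) (f : ι → (Fin n → ZMod 2) → ℝ) :
    davg p (fun e => ∑ γ ∈ T, f γ e) = ∑ γ ∈ T, davg p (f γ) := by
  rw [davg]
  simp only [Finset.mul_sum]
  rw [Finset.sum_comm]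
  rfl

lemma coeff_eq_prod (p : ℝ) (e : Fin n → ZMod 2) :
    p ^ hammingNorm e * (1 - p) ^ (n - hammingNorm e)
      = ∏ b, (if e b = 0 then (1 - p) else p) := by
  classical
  rw [Finset.prod_ite, Finset.prod_const, Finset.prod_const]
  have h1 : (Finset.univ.filter (fun b => ¬ e b = 0)).card = hammingNorm e := by
    rfl
  have h2 : (Finset.univ.filter (fun b : Fin n => e b = 0)).card +
      (Finset.univ.filter (fun b => ¬ e b = 0)).card = n := by
    rw [Finset.card_filter_add_card_filter_not]
    simp
  rw [h1]
  have h3 : (Finset.univ.filter (fun b : Fin n => e b = 0)).card = n - hammingNorm e := by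
    omega
  rw [h3, mul_comm]

lemma sum_zmod2 (f : ZMod 2 → ℝ) : ∑ v : ZMod 2, f v = f 0 + f 1 := by
  have huniv : (Finset.univ : Finset (ZMod 2)) = {0, 1} := by decide
  rw [huniv, Finset.sum_insert (by decide), Finset.sum_singleton]

lemma davg_Bfac (p K : ℝ) (γ : Fin n → ZMod 2) :
    davg p (fun e => Bfac K e γ) =
      (Real.exp (-(2*K)) * (1-p) + Real.exp (2*K) * p) ^ (suppF γ).card := by
  classical
  rw [davg]
  have h1 : ∀ e : Fin n → ZMod 2,
      p ^ hammingNorm e * (1 - p) ^ (n - hammingNorm e) * Bfac K e γ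
      = ∏ b, ((if e b = 0 then (1 - p) else p) *
          (if γ b ≠ 0 then Real.exp (-(2*K) * (-1 : ℝ)^((e b).val)) else 1)) := by
    intro e
    rw [Finset.prod_mul_distrib, ← coeff_eq_prod]
    congr 1
    rw [Bfac, suppF, Finset.prod_filter]
  rw [Finset.sum_congr rfl (fun e _ => h1 e)]
  have h2 : ∑ e : Fin n → ZMod 2, ∏ b, ((if e b = 0 then (1 - p) else p) *
      (if γ b ≠ 0 then Real.exp (-(2*K) * (-1 : ℝ)^((e b).val)) else 1))
      = ∏ b : Fin n, ∑ v : ZMod 2, ((if v = 0 then (1 - p) else p) *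
        (if γ b ≠ 0 then Real.exp (-(2*K) * (-1 : ℝ)^(v.val)) else 1)) := by
    rw [← Finset.sum_prod_piFinset]
    rw [Fintype.piFinset_univ]
  rw [h2]
  have h3 : ∀ b : Fin n, ∑ v : ZMod 2, ((if v = 0 then (1 - p) else p) *
      (if γ b ≠ 0 then Real.exp (-(2*K) * (-1 : ℝ)^(v.val)) else 1))
      = (if γ b ≠ 0 then (Real.exp (-(2*K)) * (1-p) + Real.exp (2*K) * p) else 1) := by
    intro b
    rw [sum_zmod2]
    rw [if_pos rfl, if_neg (by decide : ¬ (1 : ZMod 2) = 0)]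
    by_cases hb : γ b ≠ 0
    · rw [if_pos hb, if_pos hb, if_pos hb, ZMod.val_zero, ZMod.val_one, pow_zero, pow_one,
        mul_one]
      have hK2 : -(2*K) * (-1 : ℝ) = 2*K := by ring
      rw [hK2]
      ring
    · rw [if_neg hb, if_neg hb, if_neg hb]
      ring
  rw [Finset.prod_congr rfl (fun b _ => h3 b)]
  rw [Finset.prod_ite, Finset.prod_const, Finset.prod_const, one_pow, mul_one]
  have : Finset.univ.filter (fun b => γ b ≠ 0) = suppF γ := by
    ext b
    simp [mem_suppF]
  rw [this]

lemma mulVec_apply' {r : ℕ} (M : Matrix (Fin r) (Fin n) (ZMod 2)) (c : Fin n → ZMod 2)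
    (i : Fin r) : M.mulVec c i = ∑ b, M i b * c b := rfl

/-- counting finset: irreducible codewords of weight `ℓ` whose support contains `S` -/
noncomputable def Acnt (Hm : Matrix (Fin rH) (Fin n) (ZMod 2)) (ℓ : ℕ)
    (S : Finset (Fin n)) : Finset (Fin n → ZMod 2) :=
  @Finset.filter _ (fun c => Irr Hm c ∧ S ⊆ suppF c ∧ (suppF c).card = ℓ)
    (Classical.decPred _) Finset.univ

lemma Acnt_card (Hm : Matrix (Fin rH) (Fin n) (ZMod 2)) (m : ℕ)
    (hrow : ∀ i, (suppF (Hm i)).card ≤ m) :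
    ∀ (r : ℕ) (S : Finset (Fin n)) (ℓ : ℕ), S.Nonempty → ℓ = S.card + r →
    (Acnt Hm ℓ S).card ≤ (m - 1) ^ r := by
  intro r
  induction r with
  | zero =>
    intro S ℓ hS hℓ
    have hsub : Acnt Hm ℓ S ⊆ {indC S} := by
      intro c hc
      simp only [Acnt, Finset.mem_filter] at hc
      obtain ⟨-, hIrr, hSc, hcard⟩ := hc
      have hSe : S = suppF c := Finset.eq_of_subset_of_card_le hSc (by omega)
      rw [Finset.mem_singleton, ← indC_suppF c, ← hSe]
    calc (Acnt Hm ℓ S).card ≤ ({indC S} : Finset _).card := Finset.card_le_card hsub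
      _ ≤ (m - 1) ^ 0 := by simp
  | succ r ih =>
    intro S ℓ hS hℓ
    rcases Finset.eq_empty_or_nonempty (Acnt Hm ℓ S) with hA | hA
    · rw [hA]
      simp
    obtain ⟨c₀, hc₀⟩ := hA
    simp only [Acnt, Finset.mem_filter] at hc₀
    obtain ⟨-, hIrr₀, hSc₀, hcard₀⟩ := hc₀
    have hne : S ≠ suppF c₀ := by
      intro h
      rw [← h] at hcard₀
      omega
    have hind0 : indC S ≠ 0 := by
      intro h
      obtain ⟨b, hb⟩ := hS
      have h2 : indC S b = 0 := by rw [h]; rfl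
      rw [indC, if_pos hb] at h2
      exact one_ne_zero h2
    have hindc : indC S ≠ c₀ := fun h => hne (by rw [← suppF_indC S, h])
    have hker : Hm.mulVec (indC S) ≠ 0 :=
      hIrr₀.2.2 (indC S) hind0 hindc (by rw [suppF_indC]; exact hSc₀)
    have hexi : ∃ i, Hm.mulVec (indC S) i ≠ 0 := by
      by_contra h
      push_neg at h
      exact hker (funext h)
    obtain ⟨i, hi⟩ := hexi
    have hSrow : ∃ b₁ ∈ S, Hm i b₁ ≠ 0 := by
      by_contra h
      push_neg at h
      apply hi
      rw [mulVec_apply']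
      apply Finset.sum_eq_zero
      intro b _
      by_cases hbS : b ∈ S
      · rw [h b hbS, zero_mul]
      · rw [indC, if_neg hbS, mul_zero]
    obtain ⟨b₁, hb₁S, hb₁H⟩ := hSrow
    have hstep : ∀ c ∈ Acnt Hm ℓ S, ∃ b ∈ (suppF (Hm i)) \ S, c b ≠ 0 := by
      intro c hc
      simp only [Acnt, Finset.mem_filter] at hc
      obtain ⟨-, hIrr, hSc, hcard⟩ := hc
      have hc0 : (∑ b, Hm i b * c b) = 0 := by
        rw [← mulVec_apply', hIrr.2.1]
        rfl
      have hsum : ∑ b, Hm i b * (c b + indC S b) ≠ 0 := by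
        have hsplit : ∑ b, Hm i b * (c b + indC S b)
            = (∑ b, Hm i b * c b) + ∑ b, Hm i b * indC S b := by
          rw [← Finset.sum_add_distrib]
          exact Finset.sum_congr rfl fun b _ => by ring
        rw [hsplit, hc0, zero_add, ← mulVec_apply']
        exact hi
      obtain ⟨b, -, hb⟩ := Finset.exists_ne_zero_of_sum_ne_zero hsum
      have hHb : Hm i b ≠ 0 := fun h => hb (by rw [h, zero_mul])
      have hcb : c b + indC S b ≠ 0 := fun h => hb (by rw [h, mul_zero])
      by_cases hbS : b ∈ S
      · exfalso
        have h1 : indC S b = 1 := by rw [indC, if_pos hbS]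
        have h2 : c b = 1 := suppF_eq_one (hSc hbS)
        rw [h1, h2] at hcb
        exact hcb (zmod2_add_self 1)
      · refine ⟨b, Finset.mem_sdiff.mpr ⟨mem_suppF.mpr hHb, hbS⟩, ?_⟩
        have h1 : indC S b = 0 := by rw [indC, if_neg hbS]
        rw [h1, add_zero] at hcb
        exact hcb
    have hsub : Acnt Hm ℓ S ⊆
        (suppF (Hm i) \ S).biUnion (fun b => Acnt Hm ℓ (insert b S)) := by
      intro c hc
      obtain ⟨b, hbmem, hcb⟩ := hstep c hc
      refine Finset.mem_biUnion.mpr ⟨b, hbmem, ?_⟩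
      simp only [Acnt, Finset.mem_filter] at hc ⊢
      refine ⟨Finset.mem_univ _, hc.2.1, ?_, hc.2.2.2⟩
      rw [Finset.insert_subset_iff]
      exact ⟨mem_suppF.mpr hcb, hc.2.2.1⟩
    calc (Acnt Hm ℓ S).card
        ≤ ∑ b ∈ suppF (Hm i) \ S, (Acnt Hm ℓ (insert b S)).card :=
          le_trans (Finset.card_le_card hsub) Finset.card_biUnion_le
      _ ≤ ∑ _b ∈ suppF (Hm i) \ S, (m-1)^r := by
          apply Finset.sum_le_sum
          intro b hb
          have hbS : b ∉ S := (Finset.mem_sdiff.mp hb).2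
          exact ih (insert b S) ℓ (Finset.insert_nonempty b S)
            (by rw [Finset.card_insert_of_notMem hbS]; omega)
      _ = (suppF (Hm i) \ S).card * (m-1)^r := by rw [Finset.sum_const, smul_eq_mul]
      _ ≤ (m-1) * (m-1)^r := by
          apply Nat.mul_le_mul_right
          have hint : (suppF (Hm i) ∩ S).Nonempty :=
            ⟨b₁, Finset.mem_inter.mpr ⟨mem_suppF.mpr hb₁H, hb₁S⟩⟩
          have h4 : (suppF (Hm i) \ S).card + (suppF (Hm i) ∩ S).card
              = (suppF (Hm i)).card := Finset.card_sdiff_add_card_inter _ _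
          have h5 := hrow i
          have h6 : 1 ≤ (suppF (Hm i) ∩ S).card := Finset.card_pos.mpr hint
          omega
      _ = (m-1)^(r+1) := by rw [pow_succ]; ring

lemma IrrB_weight_card_le {rG : ℕ} (Gm : Matrix (Fin rG) (Fin n) (ZMod 2))
    (Hm : Matrix (Fin rH) (Fin n) (ZMod 2)) (m : ℕ)
    (hrow : ∀ i, (suppF (Hm i)).card ≤ m) (ℓ : ℕ) (hℓ : 1 ≤ ℓ) :
    ((IrrB Gm Hm).filter (fun γ => (suppF γ).card = ℓ)).card ≤ n * (m-1)^(ℓ-1) := by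
  classical
  have hsub : ((IrrB Gm Hm).filter (fun γ => (suppF γ).card = ℓ)) ⊆ Finset.univ.biUnion (fun b : Fin n => Acnt Hm ℓ {b}) := by
    intro γ hγ
    rw [Finset.mem_filter] at hγ
    obtain ⟨hγ1, hcard⟩ := hγ
    simp only [IrrB, Finset.mem_filter] at hγ1
    obtain ⟨-, hIrr, -⟩ := hγ1
    have hne : (suppF γ).Nonempty := by
      rw [← Finset.card_pos, hcard]
      omega
    obtain ⟨b, hb⟩ := hne
    refine Finset.mem_biUnion.mpr ⟨b, Finset.mem_univ b, ?_⟩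
    simp only [Acnt, Finset.mem_filter]
    exact ⟨Finset.mem_univ _, hIrr, Finset.singleton_subset_iff.mpr hb, hcard⟩
  calc ((IrrB Gm Hm).filter (fun γ => (suppF γ).card = ℓ)).card
      ≤ ∑ b : Fin n, (Acnt Hm ℓ {b}).card :=
        le_trans (Finset.card_le_card hsub) Finset.card_biUnion_le
    _ ≤ ∑ _b : Fin n, (m-1)^(ℓ-1) := by
        apply Finset.sum_le_sum
        intro b _
        exact Acnt_card Hm m hrow (ℓ-1) {b} ℓ (Finset.singleton_nonempty b)
          (by rw [Finset.card_singleton]; omega)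
    _ = n * (m-1)^(ℓ-1) := by
        rw [Finset.sum_const, smul_eq_mul, Finset.card_univ, Fintype.card_fin]

lemma geom_le {y : ℝ} (h0 : 0 ≤ y) (h1 : y < 1) (N : ℕ) :
    ∑ j ∈ Finset.range N, y ^ j ≤ (1 - y)⁻¹ := by
  rw [geom_sum_eq (ne_of_lt h1)]
  rw [div_le_iff_of_neg (by linarith : y - 1 < 0)]
  have hne : (1:ℝ) - y ≠ 0 := by linarith
  have h2 : (1 - y)⁻¹ * (y - 1) = -1 := by
    rw [show y - 1 = -(1-y) by ring, mul_neg, inv_mul_cancel₀ hne]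
  have h3 : 0 ≤ y ^ N := pow_nonneg h0 N
  linarith

lemma master {rG kk : ℕ} (Gm : Matrix (Fin rG) (Fin n) (ZMod 2))
    (Hm : Matrix (Fin rH) (Fin n) (ZMod 2)) (Hs : Matrix (Fin rG ⊕ Fin kk) (Fin n) (ZMod 2))
    (hHs : IsAdaptedDual Gm Hm Hs) (hk : kk = n - Gm.rank - Hm.rank)
    (m : ℕ) (hm : 2 ≤ m) (hrow : ∀ i, hammingNorm (Hm i) ≤ m)
    (K p : ℝ) (hp0 : 0 ≤ p) (hp1 : p ≤ 1)
    (hy1 : ((m:ℝ)-1) * (Real.exp (-(2*K)) * (1-p) + Real.exp (2*K) * p) < 1) :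
    davg p (fun e => deltaF Gm Hs e K) ≤
      (n:ℝ) * (((m:ℝ)-1) * (Real.exp (-(2*K)) * (1-p) + Real.exp (2*K) * p)) ^ (dCSS Gm Hm)
        * (1 - ((m:ℝ)-1) * (Real.exp (-(2*K)) * (1-p) + Real.exp (2*K) * p))⁻¹ := by
  classical
  set x : ℝ := Real.exp (-(2*K)) * (1-p) + Real.exp (2*K) * p with hxdef
  set y : ℝ := ((m:ℝ)-1) * x with hydef
  have hm1 : (1:ℝ) ≤ (m:ℝ) - 1 := by
    have : (2:ℝ) ≤ (m:ℝ) := by exact_mod_cast hm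
    linarith
  have hx0 : 0 ≤ x := by
    have := Real.exp_pos (-(2*K))
    have := Real.exp_pos (2*K)
    nlinarith
  have hy0 : 0 ≤ y := by
    rw [hydef]
    nlinarith
  have hxy : x ≤ y := by
    rw [hydef]
    nlinarith
  set d : ℕ := dCSS Gm Hm with hddef
  -- step 1: average bounded by sum over bad irreducible codewords
  have step1 : davg p (fun e => deltaF Gm Hs e K) ≤
      ∑ γ ∈ IrrB Gm Hm, x ^ (suppF γ).card := by
    calc davg p (fun e => deltaF Gm Hs e K)
        ≤ davg p (fun e => ∑ γ ∈ IrrB Gm Hm, Bfac K e γ) :=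
          davg_mono hp0 hp1 (fun e => deltaF_le_sum_Bfac Gm Hm Hs hHs hk e K)
      _ = ∑ γ ∈ IrrB Gm Hm, davg p (fun e => Bfac K e γ) :=
          davg_sum p (IrrB Gm Hm) (fun γ e => Bfac K e γ)
      _ = ∑ γ ∈ IrrB Gm Hm, x ^ (suppF γ).card :=
          Finset.sum_congr rfl fun γ _ => davg_Bfac p K γ
  -- step 2: organize by weight
  have hmaps : ∀ γ ∈ IrrB Gm Hm, (suppF γ).card ∈ Finset.range (n+1) := by
    intro γ _
    rw [Finset.mem_range]
    have : (suppF γ).card ≤ n := by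
      have := Finset.card_le_univ (suppF γ)
      rwa [Fintype.card_fin] at this
    omega
  have step2 : ∑ γ ∈ IrrB Gm Hm, x ^ (suppF γ).card
      = ∑ ℓ ∈ Finset.range (n+1), ∑ γ ∈ (IrrB Gm Hm).filter (fun γ => (suppF γ).card = ℓ),
          x ^ (suppF γ).card :=
    (Finset.sum_fiberwise_of_maps_to hmaps _).symm
  -- step 3: per-weight bound
  have step3 : ∀ ℓ ∈ Finset.range (n+1),
      (∑ γ ∈ (IrrB Gm Hm).filter (fun γ => (suppF γ).card = ℓ), x ^ (suppF γ).card)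
      ≤ if d ≤ ℓ then (n:ℝ) * y ^ ℓ else 0 := by
    intro ℓ _
    rcases Finset.eq_empty_or_nonempty ((IrrB Gm Hm).filter (fun γ => (suppF γ).card = ℓ))
      with hemp | hne
    · rw [hemp, Finset.sum_empty]
      by_cases hd : d ≤ ℓ
      · rw [if_pos hd]
        positivity
      · rw [if_neg hd]
    · obtain ⟨γ₀, hγ₀⟩ := hne
      rw [Finset.mem_filter] at hγ₀
      obtain ⟨hγ₀1, hγ₀card⟩ := hγ₀
      simp only [IrrB, Finset.mem_filter] at hγ₀1
      obtain ⟨-, hIrr₀, hnotG⟩ := hγ₀1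
      have hdle : d ≤ ℓ := by
        rw [hddef, dCSS]
        apply Nat.sInf_le
        exact ⟨γ₀, hIrr₀.2.1, hnotG, by rw [hammingNorm_eq_card_suppF, hγ₀card]⟩
      have hl1 : 1 ≤ ℓ := by
        have : suppF γ₀ ≠ ∅ := by
          intro h
          exact hIrr₀.1 (by rw [← indC_suppF γ₀, h]; funext b; simp [indC])
        have : (suppF γ₀).card ≠ 0 := fun hc => this (Finset.card_eq_zero.mp hc)
        omega
      rw [if_pos hdle]
      have hcount := IrrB_weight_card_le Gm Hm m
        (fun i => by rw [← hammingNorm_eq_card_suppF]; exact hrow i) ℓ hl1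
      calc ∑ γ ∈ (IrrB Gm Hm).filter (fun γ => (suppF γ).card = ℓ), x ^ (suppF γ).card
          = ∑ _γ ∈ (IrrB Gm Hm).filter (fun γ => (suppF γ).card = ℓ), x ^ ℓ := by
            apply Finset.sum_congr rfl
            intro γ hγ
            rw [(Finset.mem_filter.mp hγ).2]
        _ = (((IrrB Gm Hm).filter (fun γ => (suppF γ).card = ℓ)).card : ℝ) * x ^ ℓ := by
            rw [Finset.sum_const, nsmul_eq_mul]
        _ ≤ ((n * (m-1)^(ℓ-1) : ℕ) : ℝ) * x ^ ℓ := by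
            apply mul_le_mul_of_nonneg_right _ (pow_nonneg hx0 ℓ)
            exact_mod_cast hcount
        _ ≤ (n:ℝ) * y ^ ℓ := by
            push_cast
            have hℓ : ℓ = (ℓ - 1) + 1 := by omega
            rw [hℓ, pow_succ x, pow_succ y]
            have hmm : ((m:ℝ) - 1) ^ (ℓ-1) = (((m-1 : ℕ)):ℝ) ^ (ℓ-1) := by
              have : ((m-1 : ℕ) : ℝ) = (m:ℝ) - 1 := by
                have : (1:ℕ) ≤ m := by omega
                push_cast [this]
                ring
              rw [this]
            have hyx : y ^ (ℓ-1) = ((m:ℝ)-1) ^ (ℓ-1) * x ^ (ℓ-1) := by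
              rw [hydef, mul_pow]
            rw [hyx]
            have h1 : (((m-1:ℕ)):ℝ) ^ (ℓ-1) * x ^ (ℓ-1) * x
                ≤ ((m:ℝ)-1) ^ (ℓ-1) * x ^ (ℓ-1) * y := by
              rw [← hmm]
              apply mul_le_mul_of_nonneg_left hxy
              positivity
            calc (n:ℝ) * ((m-1:ℕ):ℝ) ^ (ℓ-1) * (x ^ (ℓ-1) * x)
                = (n:ℝ) * (((m-1:ℕ):ℝ) ^ (ℓ-1) * x ^ (ℓ-1) * x) := by ring
              _ ≤ (n:ℝ) * (((m:ℝ)-1) ^ (ℓ-1) * x ^ (ℓ-1) * y) := by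
                  apply mul_le_mul_of_nonneg_left h1 (Nat.cast_nonneg n)
              _ = (n:ℝ) * (((m:ℝ)-1) ^ (ℓ-1) * x ^ (ℓ-1) * y) := rfl
  -- step 4: geometric series
  have step4 : ∑ ℓ ∈ Finset.range (n+1), (if d ≤ ℓ then (n:ℝ) * y ^ ℓ else 0)
      ≤ (n:ℝ) * y ^ d * (1 - y)⁻¹ := by
    rw [← Finset.sum_filter]
    have hsub : (Finset.range (n+1)).filter (fun ℓ => d ≤ ℓ) ⊆
        Finset.image (fun j => d + j) (Finset.range (n+1)) := by
      intro ℓ hℓ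
      rw [Finset.mem_filter, Finset.mem_range] at hℓ
      rw [Finset.mem_image]
      exact ⟨ℓ - d, Finset.mem_range.mpr (by omega), by omega⟩
    calc ∑ ℓ ∈ (Finset.range (n+1)).filter (fun ℓ => d ≤ ℓ), (n:ℝ) * y ^ ℓ
        ≤ ∑ ℓ ∈ Finset.image (fun j => d + j) (Finset.range (n+1)), (n:ℝ) * y ^ ℓ := by
          apply Finset.sum_le_sum_of_subset_of_nonneg hsub
          intro ℓ _ _
          positivity
      _ = ∑ j ∈ Finset.range (n+1), (n:ℝ) * y ^ (d + j) := by
          rw [Finset.sum_image (fun a _ b _ h => by omega)]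
      _ = ∑ j ∈ Finset.range (n+1), (n:ℝ) * y ^ d * y ^ j := by
          apply Finset.sum_congr rfl
          intro j _
          rw [pow_add]
          ring
      _ = (n:ℝ) * y ^ d * ∑ j ∈ Finset.range (n+1), y ^ j := by
          rw [← Finset.mul_sum]
      _ ≤ (n:ℝ) * y ^ d * (1 - y)⁻¹ := by
          apply mul_le_mul_of_nonneg_left (geom_le hy0 hy1 (n+1))
          positivity
  calc davg p (fun e => deltaF Gm Hs e K)
      ≤ ∑ γ ∈ IrrB Gm Hm, x ^ (suppF γ).card := step1
    _ = ∑ ℓ ∈ Finset.range (n+1), ∑ γ ∈ (IrrB Gm Hm).filter (fun γ => (suppF γ).card = ℓ),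
          x ^ (suppF γ).card := step2
    _ ≤ ∑ ℓ ∈ Finset.range (n+1), (if d ≤ ℓ then (n:ℝ) * y ^ ℓ else 0) :=
        Finset.sum_le_sum step3
    _ ≤ (n:ℝ) * y ^ d * (1 - y)⁻¹ := step4

end Main

end Stmt12

open Stmt12

/-- Theorem 1: for LDPC CSS code sequences with logarithmically growing distance, the
disorder-averaged homological differences converge to zero in the region
`(m−1)[e^{−2K}(1−p) + e^{2K}p] < e^{−1/D}`. -/
theorem stmt12 (rG rH kk nn : ℕ → ℕ)
    (G : ∀ t, Matrix (Fin (rG t)) (Fin (nn t)) (ZMod 2))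
    (H : ∀ t, Matrix (Fin (rH t)) (Fin (nn t)) (ZMod 2))
    (hGH : ∀ t, G t * (H t)ᵀ = 0)
    (hk : ∀ t, kk t = nn t - (G t).rank - (H t).rank)
    (Hs : ∀ t, Matrix (Fin (rG t) ⊕ Fin (kk t)) (Fin (nn t)) (ZMod 2))
    (hHs : ∀ t, IsAdaptedDual (G t) (H t) (Hs t))
    (hmono : StrictMono nn)
    (m : ℕ) (hm : 2 ≤ m)
    (hrowG : ∀ t i, hammingNorm (G t i) ≤ m)
    (hrowH : ∀ t i, hammingNorm (H t i) ≤ m)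
    (D : ℝ) (hD : 0 < D)
    (hdist : ∀ t, D * Real.log (nn t) ≤
      (min (dCSS (G t) (H t)) (dCSS (H t) (G t)) : ℝ))
    (K p : ℝ) (hK : 0 ≤ K) (hp0 : 0 ≤ p) (hp1 : p ≤ 1)
    (hregion : ((m : ℝ) - 1) * (Real.exp (-(2 * K)) * (1 - p) + Real.exp (2 * K) * p) <
      Real.exp (-1 / D)) :
    Tendsto (fun t => davg p (fun e => deltaF (G t) (Hs t) e K)) atTop (nhds 0) := by
  set x : ℝ := Real.exp (-(2 * K)) * (1 - p) + Real.exp (2 * K) * p with hxdef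
  set y : ℝ := ((m : ℝ) - 1) * x with hydef
  have hm1 : (1:ℝ) ≤ (m:ℝ) - 1 := by
    have : (2:ℝ) ≤ (m:ℝ) := by exact_mod_cast hm
    linarith
  have hx0 : 0 < x := by
    rcases eq_or_lt_of_le hp0 with hp | hp
    · have h1 := Real.exp_pos (-(2 * K))
      rw [hxdef, ← hp]
      nlinarith
    · have h2 := Real.exp_pos (2 * K)
      have h1 := Real.exp_pos (-(2 * K))
      rw [hxdef]
      nlinarith
  have hy0 : 0 < y := by
    rw [hydef]
    nlinarith
  have hyD : y < Real.exp (-1 / D) := hregion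
  have hnegD : -1 / D < 0 := div_neg_of_neg_of_pos (by norm_num) hD
  have hy1 : y < 1 := by
    refine lt_trans hyD ?_
    exact Real.exp_lt_one_iff.mpr hnegD
  have hlogy : Real.log y < -1 / D := by
    have := Real.log_lt_log hy0 hyD
    rwa [Real.log_exp] at this
  have hlogy0 : Real.log y < 0 := lt_trans hlogy hnegD
  have hc : 1 + D * Real.log y < 0 := by
    have h1 : D * Real.log y < D * (-1 / D) := mul_lt_mul_of_pos_left hlogy hD
    have h2 : D * (-1 / D) = -1 := by
      field_simp
    rw [h2] at h1
    linarith
  -- squeeze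
  have hf0 : ∀ t, 0 ≤ davg p (fun e => deltaF (G t) (Hs t) e K) := fun t =>
    davg_nonneg hp0 hp1 (fun e => deltaF_nonneg (G t) (Hs t) (hHs t).1 e K)
  have hfg : ∀ t, davg p (fun e => deltaF (G t) (Hs t) e K) ≤
      Real.exp ((1 + D * Real.log y) * Real.log (nn t)) * (1 - y)⁻¹ := by
    intro t
    have hmaster := master (G t) (H t) (Hs t) (hHs t) (hk t) m hm (hrowH t) K p hp0 hp1 hy1
    refine hmaster.trans ?_
    apply mul_le_mul_of_nonneg_right _ (inv_nonneg.mpr (by linarith : (0:ℝ) ≤ 1 - y))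
    set d : ℕ := dCSS (G t) (H t) with hddef
    rcases Nat.eq_zero_or_pos (nn t) with hnz | hnp
    · rw [hnz]
      simp only [Nat.cast_zero, zero_mul]
      positivity
    · have hnpos : (0:ℝ) < (nn t : ℝ) := by exact_mod_cast hnp
      have hn1 : (1:ℝ) ≤ (nn t : ℝ) := by exact_mod_cast hnp
      have hlogn : 0 ≤ Real.log (nn t) := Real.log_nonneg hn1
      have hdist' : D * Real.log (nn t) ≤ (d : ℝ) := by
        refine le_trans (hdist t) ?_
        have : (min (dCSS (G t) (H t)) (dCSS (H t) (G t)) : ℕ) ≤ d := min_le_left _ _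
        exact_mod_cast this
      calc (nn t : ℝ) * y ^ d
          = Real.exp (Real.log (nn t)) * Real.exp ((d : ℝ) * Real.log y) := by
            rw [Real.exp_log hnpos]
            congr 1
            rw [← Real.log_pow, Real.exp_log (pow_pos hy0 d)]
          _ = Real.exp (Real.log (nn t) + (d : ℝ) * Real.log y) := (Real.exp_add _ _).symm
          _ ≤ Real.exp (Real.log (nn t) + (D * Real.log (nn t)) * Real.log y) := by
            apply Real.exp_le_exp.mpr
            have := mul_le_mul_of_nonpos_right hdist' (le_of_lt hlogy0)
            linarith
          _ = Real.exp ((1 + D * Real.log y) * Real.log (nn t)) := by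
            congr 1
            ring
  have hg : Tendsto (fun t => Real.exp ((1 + D * Real.log y) * Real.log (nn t)) * (1 - y)⁻¹)
      atTop (nhds 0) := by
    have h1 : Tendsto (fun t => (nn t : ℝ)) atTop atTop := by
      apply tendsto_natCast_atTop_atTop.comp
      apply tendsto_atTop_mono (fun t => hmono.le_apply)
      exact tendsto_id
    have h2 : Tendsto (fun t => Real.log (nn t)) atTop atTop :=
      Real.tendsto_log_atTop.comp h1
    have h3 : Tendsto (fun t => (1 + D * Real.log y) * Real.log (nn t)) atTop atBot :=
      Filter.Tendsto.const_mul_atTop_of_neg hc h2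
    have h4 : Tendsto (fun t => Real.exp ((1 + D * Real.log y) * Real.log (nn t)))
        atTop (nhds 0) := Real.tendsto_exp_atBot.comp h3
    have h5 := h4.mul_const ((1 - y)⁻¹)
    rwa [zero_mul] at h5
  exact squeeze_zero hf0 hfg hg
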